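/- Let G be a group containing a normal infinite cyclic subgroup C, and let H be a subgroup of G with at least 3 elements and H ≠ G. Then H is not malnormal in G. -/

import Mathlib

def IsMalnormal {G : Type*} [Group G] (H : Subgroup G) : Prop :=
  ∀ g : G, g ∉ H → ∀ x : G, x ∈ H → g⁻¹ * x * g ∈ H → x = 1

lemma int_addEquiv_pm (ψ : ℤ ≃+ ℤ) (n : ℤ) : ψ n = n ∨ ψ n = -n := by
  have h1 : ∀ m : ℤ, ψ m = m * ψ 1 := by
    intro m
    have h0 : ψ m = ψ (m • (1 : ℤ)) := by norm_num
    rw [h0, map_zsmul, zsmul_eq_mul]; norm_cast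
  have hu : IsUnit (ψ 1) := by
    obtain ⟨m, hm⟩ := ψ.surjective 1
    rw [h1 m] at hm
    exact IsUnit.of_mul_eq_one m (by linarith [hm])
  rcases Int.isUnit_iff.mp hu with h | h <;> rw [h1 n, h] <;> ring_nf <;> tauto

theorem not_malnormal_of_normal_infinite_cyclic {G : Type*} [Group G]
    (C H : Subgroup G) [C.Normal] (hC : Nonempty (C ≃* Multiplicative ℤ))
    (hcard : ∃ a b c : G, a ∈ H ∧ b ∈ H ∧ c ∈ H ∧ a ≠ b ∧ a ≠ c ∧ b ≠ c)
    (hne : H ≠ ⊤) :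
    ¬ IsMalnormal H := by
  intro hmal
  obtain ⟨e⟩ := hC
  set T : C := e.symm (Multiplicative.ofAdd 1) with hTdef
  have hT1 : (T : G) ≠ 1 := by
    intro h
    have : T = (1 : C) := Subtype.ext (by simpa using h)
    rw [hTdef] at this
    have := e.symm.injective (this.trans (map_one e.symm).symm)
    set_option linter.unnecessarySimpa false in simpa using this
  -- key: conjugation sends T to T or T⁻¹
  have key : ∀ g : G, g * (T : G) * g⁻¹ = T ∨ g * (T : G) * g⁻¹ = (T : G)⁻¹ := by
    intro g
    set ψ : Multiplicative ℤ ≃* Multiplicative ℤ :=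
      e.symm.trans ((MulAut.conjNormal g : C ≃* C).trans e) with hψ
    have hadd := int_addEquiv_pm (MulEquiv.toAdditive ψ) 1
    have hψ1 : ψ (Multiplicative.ofAdd 1) = e (MulAut.conjNormal g T) := by
      simp [hψ, hTdef]
    have hconj : (MulAut.conjNormal g T : G) = g * T * g⁻¹ := MulAut.conjNormal_apply g T
    rcases hadd with h | h
    · left
      have : ψ (Multiplicative.ofAdd 1) = Multiplicative.ofAdd 1 := by
        exact Multiplicative.toAdd.injective h
      rw [hψ1] at this
      have : MulAut.conjNormal g T = T := by
        apply e.injective; rw [this, hTdef]; simp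
      rw [← hconj, this]
    · right
      have : ψ (Multiplicative.ofAdd 1) = (Multiplicative.ofAdd 1)⁻¹ := by
        exact Multiplicative.toAdd.injective (by rw [toAdd_inv, toAdd_ofAdd]; exact h)
      rw [hψ1] at this
      have hT' : MulAut.conjNormal g T = T⁻¹ := by
        apply e.injective; rw [this, hTdef]; simp
      rw [← hconj, hT']
      simp
  by_cases hTH : (T : G) ∈ H
  · -- pick g ∉ H
    have : ∃ g : G, g ∉ H := by
      by_contra h
      push_neg at h
      exact hne ((Subgroup.eq_top_iff' H).mpr h)
    obtain ⟨g, hg⟩ := this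
    have hmem : g⁻¹ * (T : G) * g ∈ H := by
      rcases key g⁻¹ with h | h <;> rw [show g⁻¹ * (T:G) * g = g⁻¹ * (T:G) * g⁻¹⁻¹ by group, h]
      · exact hTH
      · exact H.inv_mem hTH
    exact hT1 (hmal g hg T hTH hmem)
  · -- find nontrivial x ∈ H commuting with T
    obtain ⟨a, b, c, ha, hb, hc, hab, hac, hbc⟩ := hcard
    -- choose two distinct nontrivial elements u v of H
    obtain ⟨u, v, hu, hv, hu1, hv1, huv⟩ :
        ∃ u v : G, u ∈ H ∧ v ∈ H ∧ u ≠ 1 ∧ v ≠ 1 ∧ u ≠ v := by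
      rcases eq_or_ne a 1 with h | h
      · exact ⟨b, c, hb, hc, h ▸ hab.symm, h ▸ hac.symm, hbc⟩
      · rcases eq_or_ne b 1 with h' | h'
        · exact ⟨a, c, ha, hc, h, h' ▸ hbc.symm, hac⟩
        · exact ⟨a, b, ha, hb, h, h', hab⟩
    obtain ⟨x, hx, hx1, hcomm⟩ : ∃ x : G, x ∈ H ∧ x ≠ 1 ∧ x * (T : G) * x⁻¹ = T := by
      rcases key u with h | h
      · exact ⟨u, hu, hu1, h⟩
      · rcases key v with h' | h'
        · exact ⟨v, hv, hv1, h'⟩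
        · rcases eq_or_ne (u * v) 1 with huv1 | huv1
          · refine ⟨u * u, H.mul_mem hu hu, ?_, ?_⟩
            · intro h2
              apply huv
              have : v = u⁻¹ := (inv_eq_of_mul_eq_one_right huv1).symm
              rw [this]
              have : u * u = 1 := h2
              calc u = u * (u * u⁻¹) := by group
                _ = u⁻¹ := by rw [← mul_assoc, this]; group
            · have : u * u * (T:G) * (u * u)⁻¹ = u * (u * (T:G) * u⁻¹) * u⁻¹ := by group
              rw [this, h]
              calc u * (T:G)⁻¹ * u⁻¹ = (u * (T:G) * u⁻¹)⁻¹ := by group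
                _ = ((T:G)⁻¹)⁻¹ := by rw [h]
                _ = T := by group
          · refine ⟨u * v, H.mul_mem hu hv, huv1, ?_⟩
            have : u * v * (T:G) * (u * v)⁻¹ = u * (v * (T:G) * v⁻¹) * u⁻¹ := by group
            rw [this, h']
            calc u * (T:G)⁻¹ * u⁻¹ = (u * (T:G) * u⁻¹)⁻¹ := by group
              _ = ((T:G)⁻¹)⁻¹ := by rw [h]
              _ = T := by group
    have hmem : (T : G)⁻¹ * x * (T : G) ∈ H := by
      have : (T : G)⁻¹ * x * (T : G) = x := by
        have := hcomm
        calc (T : G)⁻¹ * x * (T : G) = (T:G)⁻¹ * (x * (T:G) * x⁻¹) * x := by group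
          _ = x := by rw [hcomm]; group
      rw [this]; exact hx
    exact hx1 (hmal T hTH x hx hmem)
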